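/- Fix an integer h ≥ 2 and reals a ≥ b > 0, t > 0, ε > 0. Set μ = a + b − 2√(ab) · √( (t+1)²/(16 a b ε²) · (h/(h−1))^{2h−2} + 1 ). There exists N such that for every integer n ≥ N and every integer s with 1 ≤ s ≤ n/2 the following holds: let m = 2 ∑_{i=1}^{min(h−1,s)} C(s,i) C(n−s,h−i), let p = a·log n / C(n−1,h−1) and q = b·log n / C(n−1,h−1), and let X₁ ~ Binomial(m, p) and X₂ ~ Binomial(m, q) be independent. Then Pr( X₁ − X₂ < ((t+1)/ε)·log n ) ≤ n^{ −( (4 s (1 − s/n) / 2^{h−1}) · μ − ((t+1)/(2ε)) · log(a/b) ) }. -/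

import Mathlib

/-- The probability mass function of the binomial distribution `Binomial(m, p)`. -/
noncomputable def binomPMF (m : ℕ) (p : ℝ) (k : ℕ) : ℝ :=
  (m.choose k : ℝ) * p ^ k * (1 - p) ^ (m - k)


set_option maxHeartbeats 1000000

open Finset


lemma binom_sum_mul (m : ℕ) (p u : ℝ) :
    ∑ k ∈ range (m + 1), binomPMF m p k * u ^ k = (p * u + (1 - p)) ^ m := by
  rw [add_pow]
  refine Finset.sum_congr rfl fun k hk => ?_
  rw [binomPMF, mul_pow]; ring

lemma binom_sum_one (m : ℕ) (p : ℝ) :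
    ∑ k ∈ range (m + 1), binomPMF m p k = 1 := by
  have := binom_sum_mul m p 1
  simp only [one_pow, mul_one] at this
  rw [this]; ring_nf

lemma choose_mul_pow_le (s n h : ℕ) (hsn : s ≤ n) :
    s.choose h * n ^ h ≤ s ^ h * n.choose h := by
  have key : s.descFactorial h * n ^ h ≤ s ^ h * n.descFactorial h := by
    rw [Nat.descFactorial_eq_prod_range, Nat.descFactorial_eq_prod_range]
    calc (∏ i ∈ range h, (s - i)) * n ^ h
        = ∏ i ∈ range h, (s - i) * n := by
          rw [Finset.prod_mul_distrib, Finset.prod_const, Finset.card_range]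
      _ ≤ ∏ i ∈ range h, s * (n - i) := by
          refine Finset.prod_le_prod' fun i _ => ?_
          rw [Nat.sub_mul, Nat.mul_sub]
          exact Nat.sub_le_sub_left (by rw [mul_comm s i]; exact Nat.mul_le_mul_left i hsn) _
      _ = s ^ h * ∏ i ∈ range h, (n - i) := by
          rw [Finset.prod_mul_distrib, Finset.prod_const, Finset.card_range]
  rw [Nat.descFactorial_eq_factorial_mul_choose, Nat.descFactorial_eq_factorial_mul_choose] at key
  have hf : 0 < h.factorial := Nat.factorial_pos h
  refine Nat.le_of_mul_le_mul_left ?_ hf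
  calc h.factorial * (s.choose h * n ^ h) = h.factorial * s.choose h * n ^ h := by ring
    _ ≤ s ^ h * (h.factorial * n.choose h) := key
    _ = h.factorial * (s ^ h * n.choose h) := by ring


lemma vander_ge (s n h : ℕ) (hh : 2 ≤ h) (hs : s ≤ n) :
    n.choose h ≤ (∑ i ∈ Icc 1 (min (h - 1) s), s.choose i * (n - s).choose (h - i))
      + s.choose h + (n - s).choose h := by
  have h1 : 1 ≤ h := le_trans (by norm_num) hh
  have hid : n.choose h = ∑ i ∈ range (h + 1), s.choose i * (n - s).choose (h - i) := by
    conv_lhs => rw [← Nat.add_sub_cancel' hs, Nat.add_choose_eq]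
    rw [Finset.Nat.sum_antidiagonal_eq_sum_range_succ (fun i j => s.choose i * (n - s).choose j)]
  set S : Finset ℕ := insert 0 (insert h (Icc 1 (min (h - 1) s))) with hS
  have hsub : S ⊆ range (h + 1) := by
    intro i hi
    simp only [hS, Finset.mem_insert, Finset.mem_Icc, Finset.mem_range] at hi ⊢
    rcases hi with rfl | rfl | ⟨_, hi2⟩
    · omega
    · omega
    · have := le_min_iff.mp (le_refl (min (h-1) s))
      omega
  have hzero : ∀ i ∈ range (h + 1), i ∉ S → s.choose i * (n - s).choose (h - i) = 0 := by
    intro i hi hiS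
    simp only [hS, Finset.mem_insert, Finset.mem_Icc, Finset.mem_range, not_or, not_and_or,
      not_le] at hi hiS
    obtain ⟨hi0, hih, hic⟩ := hiS
    have : s < i := by
      rcases le_total (h - 1) s with hc | hc
      · rw [min_eq_left hc] at hic; omega
      · rw [min_eq_right hc] at hic; omega
    rw [Nat.choose_eq_zero_of_lt this, Nat.zero_mul]
  have heq : ∑ i ∈ S, s.choose i * (n - s).choose (h - i)
      = ∑ i ∈ range (h + 1), s.choose i * (n - s).choose (h - i) :=
    Finset.sum_subset hsub hzero
  have h0notin : (0 : ℕ) ∉ insert h (Icc 1 (min (h - 1) s)) := by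
    simp only [Finset.mem_insert, Finset.mem_Icc]
    omega
  have hhnotin : h ∉ Icc 1 (min (h - 1) s) := by
    simp only [Finset.mem_Icc]
    omega
  have hSsum : ∑ i ∈ S, s.choose i * (n - s).choose (h - i)
      = (n - s).choose h + s.choose h
        + ∑ i ∈ Icc 1 (min (h - 1) s), s.choose i * (n - s).choose (h - i) := by
    rw [hS, Finset.sum_insert h0notin, Finset.sum_insert hhnotin]
    simp [Nat.choose_zero_right]
    omega
  omega


lemma key_real (h : ℕ) (hh : 2 ≤ h) (x : ℝ) (hx0 : 0 ≤ x) (hx : x ≤ 1 / 2) :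
    (h : ℝ) * x * (1 - x) * 4 / 2 ^ h ≤ 1 - x ^ h - (1 - x) ^ h := by
  have hx1 : 0 ≤ 1 - x := by linarith
  have hone : (1 : ℝ) = ∑ k ∈ range (h + 1), x ^ k * (1 - x) ^ (h - k) * (h.choose k : ℝ) := by
    rw [← add_pow]; norm_num
  set S : Finset ℕ := insert 0 (insert 1 {h}) with hS
  have hsub : S ⊆ range (h + 1) := by
    intro i hi
    simp only [hS, Finset.mem_insert, Finset.mem_singleton, Finset.mem_range] at hi ⊢
    omega
  have hge : ∑ k ∈ S, x ^ k * (1 - x) ^ (h - k) * (h.choose k : ℝ)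
      ≤ ∑ k ∈ range (h + 1), x ^ k * (1 - x) ^ (h - k) * (h.choose k : ℝ) := by
    refine Finset.sum_le_sum_of_subset_of_nonneg hsub fun k _ _ => ?_
    positivity
  have hSsum : ∑ k ∈ S, x ^ k * (1 - x) ^ (h - k) * (h.choose k : ℝ)
      = (1 - x) ^ h + (h : ℝ) * x * (1 - x) ^ (h - 1) + x ^ h := by
    rw [hS, Finset.sum_insert (by simp; omega), Finset.sum_insert (by simp; omega),
      Finset.sum_singleton]
    simp [Nat.choose_one_right, Nat.sub_self]
    ring
  have hpow : (1 : ℝ) / 2 ^ (h - 2) ≤ (1 - x) ^ (h - 2) := by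
    rw [one_div, ← inv_pow]
    refine pow_le_pow_left₀ (by norm_num) (by linarith) _
  have hsplit : (1 - x) ^ (h - 1) = (1 - x) * (1 - x) ^ (h - 2) := by
    rw [← pow_succ']
    congr 1
    omega
  have h2h : (2 : ℝ) ^ h = 2 ^ (h - 2) * 4 := by
    have : h = (h - 2) + 2 := by omega
    rw [this, pow_add]
    norm_num
  have hmain : (h : ℝ) * x * (1 - x) * 4 / 2 ^ h ≤ (h : ℝ) * x * (1 - x) ^ (h - 1) := by
    have h2p : (0 : ℝ) < 2 ^ (h - 2) := by positivity
    have hmul := mul_le_mul_of_nonneg_left hpow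
      (by positivity : (0:ℝ) ≤ (h : ℝ) * x * (1 - x))
    calc (h : ℝ) * x * (1 - x) * 4 / 2 ^ h
        = (h : ℝ) * x * (1 - x) * (1 / 2 ^ (h - 2)) := by
          rw [h2h]; field_simp
      _ ≤ (h : ℝ) * x * (1 - x) * (1 - x) ^ (h - 2) := hmul
      _ = (h : ℝ) * x * ((1 - x) * (1 - x) ^ (h - 2)) := by ring
      _ = (h : ℝ) * x * (1 - x) ^ (h - 1) := by rw [← hsplit]
  have := hge
  rw [hSsum, ← hone] at this
  nlinarith [hmain]

lemma m_ge (h s n : ℕ) (hh : 2 ≤ h) (hs : 1 ≤ s) (hsn : 2 * s ≤ n) (hhn : h ≤ n) :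
    4 * (s : ℝ) * (1 - (s : ℝ) / (n : ℝ)) / 2 ^ (h - 1) * (((n - 1).choose (h - 1) : ℕ) : ℝ)
      ≤ ((2 * ∑ i ∈ Icc 1 (min (h - 1) s), s.choose i * (n - s).choose (h - i) : ℕ) : ℝ) := by
  have hn0 : 0 < n := by omega
  have hnR : (0 : ℝ) < (n : ℝ) := by exact_mod_cast hn0
  have hsleN : s ≤ n := by omega
  set x : ℝ := (s : ℝ) / (n : ℝ) with hx
  have hx0 : 0 ≤ x := by positivity
  have h2s : (2 : ℝ) * (s : ℝ) ≤ (n : ℝ) := by exact_mod_cast hsn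
  have hxhalf : x ≤ 1 / 2 := by
    rw [hx, div_le_div_iff₀ hnR (by norm_num)]
    linarith
  -- cast of n - s
  have hcast : ((n - s : ℕ) : ℝ) = (n : ℝ) - (s : ℝ) := by
    rw [Nat.cast_sub hsleN]
  have hnsx : ((n - s : ℕ) : ℝ) / (n : ℝ) = 1 - x := by
    rw [hcast, hx]; field_simp
  -- A1 : choose ratio bounds
  have hA1 : (s.choose h : ℝ) ≤ x ^ h * (n.choose h : ℝ) := by
    have := choose_mul_pow_le s n h hsleN
    have hcast2 : ((s.choose h * n ^ h : ℕ) : ℝ) ≤ ((s ^ h * n.choose h : ℕ) : ℝ) := by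
      exact_mod_cast this
    push_cast at hcast2
    rw [hx, div_pow, div_mul_eq_mul_div, le_div_iff₀ (by positivity)]
    linarith
  have hA2 : ((n - s).choose h : ℝ) ≤ (1 - x) ^ h * (n.choose h : ℝ) := by
    have := choose_mul_pow_le (n - s) n h (by omega)
    have hcast2 : (((n - s).choose h * n ^ h : ℕ) : ℝ) ≤ (((n - s) ^ h * n.choose h : ℕ) : ℝ) := by
      exact_mod_cast this
    push_cast at hcast2
    have h1x : 1 - x = ((n - s : ℕ) : ℝ) / (n : ℝ) := hnsx.symm
    rw [h1x, div_pow, div_mul_eq_mul_div, le_div_iff₀ (by positivity)]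
    linarith
  -- A3 : Vandermonde
  have hA3 : (n.choose h : ℝ) ≤ ((∑ i ∈ Icc 1 (min (h - 1) s), s.choose i * (n - s).choose (h - i) : ℕ) : ℝ)
      + (s.choose h : ℝ) + ((n - s).choose h : ℝ) := by
    exact_mod_cast vander_ge s n h hh hsleN
  -- A4 : n * C(n-1,h-1) = h * C(n,h)
  have hA4 : (n : ℝ) * (((n - 1).choose (h - 1) : ℕ) : ℝ) = (h : ℝ) * (n.choose h : ℝ) := by
    have := Nat.add_one_mul_choose_eq (n - 1) (h - 1)
    have e1 : n - 1 + 1 = n := by omega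
    have e2 : h - 1 + 1 = h := by omega
    rw [e1, e2] at this
    exact_mod_cast congrArg (Nat.cast : ℕ → ℝ) (this.trans (mul_comm _ _))
  have hC0 : (0 : ℝ) ≤ (n.choose h : ℝ) := by positivity
  have hkey := key_real h hh x hx0 hxhalf
  -- combine
  have hsum : ((∑ i ∈ Icc 1 (min (h - 1) s), s.choose i * (n - s).choose (h - i) : ℕ) : ℝ)
      ≥ (n.choose h : ℝ) * ((h : ℝ) * x * (1 - x) * 4 / 2 ^ h) := by
    have := mul_le_mul_of_nonneg_left hkey hC0
    nlinarith [hA1, hA2, hA3]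
  have hfinal : ((2 * ∑ i ∈ Icc 1 (min (h - 1) s), s.choose i * (n - s).choose (h - i) : ℕ) : ℝ)
      ≥ 2 * ((n.choose h : ℝ) * ((h : ℝ) * x * (1 - x) * 4 / 2 ^ h)) := by
    push_cast
    push_cast at hsum
    linarith
  refine le_trans ?_ hfinal
  -- show 4 s (1-x) / 2^(h-1) * c' ≤ 2 * (C * h x (1-x) 4 / 2^h)
  have h2 : (2 : ℝ) ^ h = 2 ^ (h - 1) * 2 := by
    conv_lhs => rw [show h = (h - 1) + 1 by omega]
    rw [pow_succ]
  have hhx : (h : ℝ) * x = (h : ℝ) * (s : ℝ) / (n : ℝ) := by rw [hx]; ring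
  -- use hA4 : n * c' = h * C  =>  C * h = n * c'  ... compute both sides
  have hc'0 : (0 : ℝ) ≤ (((n - 1).choose (h - 1) : ℕ) : ℝ) := by positivity
  have hCh : (n.choose h : ℝ) * (h : ℝ) = (n : ℝ) * (((n - 1).choose (h - 1) : ℕ) : ℝ) := by
    linarith [hA4]
  have h2p : (0 : ℝ) < 2 ^ (h - 1) := by positivity
  have hgoal : 2 * ((n.choose h : ℝ) * ((h : ℝ) * x * (1 - x) * 4 / 2 ^ h))
      = 4 * (s : ℝ) * (1 - x) / 2 ^ (h - 1) * (((n - 1).choose (h - 1) : ℕ) : ℝ) := by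
    calc 2 * ((n.choose h : ℝ) * ((h : ℝ) * x * (1 - x) * 4 / 2 ^ h))
        = ((n.choose h : ℝ) * (h : ℝ)) * (x * (1 - x) * 8 / 2 ^ h) := by ring
      _ = ((n : ℝ) * (((n - 1).choose (h - 1) : ℕ) : ℝ))
            * ((s : ℝ) / (n : ℝ) * (1 - x) * 8 / (2 ^ (h - 1) * 2)) := by
          rw [hCh, ← h2, ← hx]
      _ = 4 * (s : ℝ) * (1 - x) / 2 ^ (h - 1) * (((n - 1).choose (h - 1) : ℕ) : ℝ) := by
          field_simp
          ring
  rw [hgoal]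

/-- Lemma 2 of the paper: for `h ≥ 2`, `a ≥ b > 0`, `t, ε > 0`, and
`μ = a + b − 2√(ab) √((t+1)²/(16 a b ε²) (h/(h−1))^{2h−2} + 1)`, there exists `N` such that
for all `n ≥ N` and `1 ≤ s ≤ n/2`, with `m = 2 ∑_{i=1}^{min(h−1,s)} C(s,i) C(n−s,h−i)`,
`p = a log n / C(n−1,h−1)`, `q = b log n / C(n−1,h−1)` and independent
`X₁ ~ Binomial(m,p)`, `X₂ ~ Binomial(m,q)`:
`Pr(X₁ − X₂ < ((t+1)/ε) log n) ≤ n^{−((4s(1−s/n)/2^{h−1}) μ − ((t+1)/(2ε)) log(a/b))}`.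
The probability is written out explicitly via the joint (product) pmf. -/
theorem stmt6 (h : ℕ) (hh : 2 ≤ h) (a b t ε : ℝ)
    (hb : 0 < b) (hba : b ≤ a) (ht : 0 < t) (hε : 0 < ε) :
    ∃ N : ℕ, ∀ n : ℕ, N ≤ n → ∀ s : ℕ, 1 ≤ s → 2 * s ≤ n →
      (∑ k1 ∈ Finset.range ((2 * ∑ i ∈ Finset.Icc 1 (min (h - 1) s),
            (s.choose i) * ((n - s).choose (h - i))) + 1),
        ∑ k2 ∈ Finset.range ((2 * ∑ i ∈ Finset.Icc 1 (min (h - 1) s),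
            (s.choose i) * ((n - s).choose (h - i))) + 1),
          (if (k1 : ℝ) - (k2 : ℝ) < ((t + 1) / ε) * Real.log n then
            binomPMF (2 * ∑ i ∈ Finset.Icc 1 (min (h - 1) s),
                (s.choose i) * ((n - s).choose (h - i)))
              (a * Real.log n / ((n - 1).choose (h - 1) : ℝ)) k1 *
            binomPMF (2 * ∑ i ∈ Finset.Icc 1 (min (h - 1) s),
                (s.choose i) * ((n - s).choose (h - i)))
              (b * Real.log n / ((n - 1).choose (h - 1) : ℝ)) k2
          else 0))
      ≤ (n : ℝ) ^ (-((4 * (s : ℝ) * (1 - (s : ℝ) / (n : ℝ)) / 2 ^ (h - 1)) *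
            (a + b - 2 * Real.sqrt (a * b) *
              Real.sqrt ((t + 1) ^ 2 / (16 * a * b * ε ^ 2) *
                ((h : ℝ) / ((h : ℝ) - 1)) ^ (2 * h - 2) + 1))
          - ((t + 1) / (2 * ε)) * Real.log (a / b))) := by
  have ha : 0 < a := lt_of_lt_of_le hb hba
  have hhR : (2 : ℝ) ≤ (h : ℝ) := by exact_mod_cast hh
  have hh1R : (0 : ℝ) < (h : ℝ) - 1 := by linarith
  have hcpos : (0 : ℝ) < 1 / (2 * (a * ((h : ℝ) - 1))) := by positivity
  have hlo := Real.isLittleO_log_id_atTop.def hcpos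
  rw [Filter.eventually_atTop] at hlo
  obtain ⟨x₀, hx₀⟩ := hlo
  refine ⟨max (h + 2) (⌈x₀⌉₊ + 2), fun n hn s hs1 hs2 => ?_⟩
  have hnh : h ≤ n := le_trans (by omega) (le_trans (le_max_left _ _) hn)
  have hn2 : 2 ≤ n := by omega
  have hsn : s ≤ n := by omega
  have hnR : (0 : ℝ) < (n : ℝ) := by positivity
  have hn1R : (1 : ℝ) < (n : ℝ) := by exact_mod_cast (by omega : 1 < n)
  -- abbreviations
  set L := Real.log (n : ℝ) with hLdef
  set c' := (((n - 1).choose (h - 1) : ℕ) : ℝ) with hc'def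
  set m := 2 * ∑ i ∈ Finset.Icc 1 (min (h - 1) s), (s.choose i) * ((n - s).choose (h - i))
    with hmdef
  set p := a * L / c' with hpdef
  set q := b * L / c' with hqdef
  set K := (t + 1) ^ 2 / (16 * a * b * ε ^ 2) * ((h : ℝ) / ((h : ℝ) - 1)) ^ (2 * h - 2) with hKdef
  set μ := a + b - 2 * Real.sqrt (a * b) * Real.sqrt (K + 1) with hμdef
  set M := 4 * (s : ℝ) * (1 - (s : ℝ) / (n : ℝ)) / 2 ^ (h - 1) with hMdef
  set D := (t + 1) / (2 * ε) * Real.log (a / b) with hDdef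
  -- basic facts
  have hL : 0 < L := Real.log_pos hn1R
  have hc' : (0 : ℝ) < c' := by
    rw [hc'def]
    exact_mod_cast Nat.choose_pos (by omega : h - 1 ≤ n - 1)
  have hclower : ((n : ℝ) - 1) ≤ ((h : ℝ) - 1) * c' := by
    have hnat := Nat.add_one_mul_choose_eq (n - 2) (h - 2)
    have e1 : n - 2 + 1 = n - 1 := by omega
    have e2 : h - 2 + 1 = h - 1 := by omega
    rw [e1, e2] at hnat
    have hpos : 1 ≤ (n - 2).choose (h - 2) := Nat.choose_pos (by omega : h - 2 ≤ n - 2)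
    have : (n - 1) * 1 ≤ (n - 1).choose (h - 1) * (h - 1) := by
      rw [← hnat]; exact Nat.mul_le_mul_left _ hpos
    rw [mul_one] at this
    have hcast : ((n - 1 : ℕ) : ℝ) ≤ (((n - 1).choose (h - 1) : ℕ) : ℝ) * ((h - 1 : ℕ) : ℝ) := by
      exact_mod_cast this
    have en : ((n - 1 : ℕ) : ℝ) = (n : ℝ) - 1 := by
      rw [Nat.cast_sub (by omega)]; norm_num
    have eh : ((h - 1 : ℕ) : ℝ) = (h : ℝ) - 1 := by
      rw [Nat.cast_sub (by omega)]; norm_num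
    rw [en, eh] at hcast
    rw [hc'def]; linarith
  have haL : a * L ≤ c' := by
    have hx : x₀ ≤ (n : ℝ) := by
      have h1 : (⌈x₀⌉₊ : ℝ) ≤ (n : ℝ) := by
        exact_mod_cast le_trans (by omega : ⌈x₀⌉₊ ≤ ⌈x₀⌉₊ + 2) (le_trans (le_max_right _ _) hn)
      exact le_trans (Nat.le_ceil x₀) h1
    have hb1 := hx₀ (n : ℝ) hx
    simp only [Real.norm_eq_abs, id] at hb1
    rw [abs_of_nonneg (Real.log_nonneg (by linarith)), abs_of_nonneg (by positivity)] at hb1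
    -- hb1 : Real.log n ≤ 1/(2*(a*((h:ℝ)-1))) * n
    have h2 : a * ((h : ℝ) - 1) * L ≤ (n : ℝ) / 2 := by
      rw [hLdef]
      have := mul_le_mul_of_nonneg_left hb1 (by positivity : (0:ℝ) ≤ a * ((h : ℝ) - 1))
      calc a * ((h : ℝ) - 1) * Real.log (n : ℝ)
          ≤ a * ((h : ℝ) - 1) * (1 / (2 * (a * ((h : ℝ) - 1))) * (n : ℝ)) := this
        _ = (n : ℝ) / 2 := by field_simp
    have h3 : (n : ℝ) / 2 ≤ (n : ℝ) - 1 := by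
      have : (2 : ℝ) ≤ (n : ℝ) := by exact_mod_cast hn2
      linarith
    nlinarith [hclower, hL, ha, hh1R]
  have hp0 : 0 ≤ p := by rw [hpdef]; positivity
  have hp1 : p ≤ 1 := by rw [hpdef, div_le_one hc']; exact haL
  have hq0 : 0 ≤ q := by rw [hqdef]; positivity
  have hqp : q ≤ p := by
    rw [hpdef, hqdef]
    exact (div_le_div_iff_of_pos_right hc').mpr (mul_le_mul_of_nonneg_right hba hL.le)
  have hq1 : q ≤ 1 := le_trans hqp hp1
  have hpmf : ∀ (r : ℝ), 0 ≤ r → r ≤ 1 → ∀ k, 0 ≤ binomPMF m r k := by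
    intro r h0 h1 k
    unfold binomPMF
    have : 0 ≤ 1 - r := by linarith
    positivity
  have hMc : M * c' ≤ (m : ℝ) := by
    rw [hMdef, hc'def, hmdef]
    exact_mod_cast m_ge h s n hh hs1 hs2 hnh
  have hD0 : 0 ≤ D := by
    rw [hDdef]
    have : (0:ℝ) ≤ Real.log (a / b) := Real.log_nonneg ((one_le_div hb).mpr hba)
    positivity
  have hM0 : 0 ≤ M := by
    rw [hMdef]
    have hsn1 : (s : ℝ) / (n : ℝ) ≤ 1 := by
      rw [div_le_one hnR]; exact_mod_cast hsn
    have : (0:ℝ) ≤ 1 - (s:ℝ)/(n:ℝ) := by linarith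
    positivity
  rcases le_or_gt μ 0 with hμ | hμ
  · -- trivial case: RHS ≥ 1 ≥ LHS
    calc (∑ k1 ∈ Finset.range (m + 1), ∑ k2 ∈ Finset.range (m + 1),
          (if (k1 : ℝ) - (k2 : ℝ) < (t + 1) / ε * L then binomPMF m p k1 * binomPMF m q k2
            else 0))
        ≤ ∑ k1 ∈ Finset.range (m + 1), ∑ k2 ∈ Finset.range (m + 1),
            binomPMF m p k1 * binomPMF m q k2 := by
          refine Finset.sum_le_sum fun k1 _ => Finset.sum_le_sum fun k2 _ => ?_
          split_ifs with hcond
          · exact le_refl _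
          · exact mul_nonneg (hpmf p hp0 hp1 k1) (hpmf q hq0 hq1 k2)
      _ = (∑ k1 ∈ Finset.range (m + 1), binomPMF m p k1)
            * (∑ k2 ∈ Finset.range (m + 1), binomPMF m q k2) :=
          (Finset.sum_mul_sum (Finset.range (m+1)) (Finset.range (m+1)) (binomPMF m p) (binomPMF m q)).symm
      _ = 1 := by rw [binom_sum_one, binom_sum_one, mul_one]
      _ ≤ (n : ℝ) ^ (-(M * μ - D)) := by
          have h0 : ((n:ℝ)) ^ (0:ℝ) ≤ (n : ℝ) ^ (-(M * μ - D)) :=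
            Real.rpow_le_rpow_of_exponent_le (by linarith)
              (by
                have h9 : M * -μ = -(M * μ) := by ring
                have h10 := mul_nonneg hM0 (neg_nonneg.mpr hμ)
                linarith)
          rwa [Real.rpow_zero] at h0
  · -- Chernoff case
    have hK0 : 0 < K := by
      rw [hKdef]
      have h1 : (0:ℝ) < (t + 1) ^ 2 / (16 * a * b * ε ^ 2) := by positivity
      have h2 : (0:ℝ) < ((h : ℝ) / ((h : ℝ) - 1)) ^ (2 * h - 2) := by
        apply pow_pos
        positivity
      exact mul_pos h1 h2
    set sk := Real.sqrt K with hskdef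
    set sk1 := Real.sqrt (K + 1) with hsk1def
    have hsk0 : 0 ≤ sk := Real.sqrt_nonneg _
    have hsq : sk ^ 2 = K := Real.sq_sqrt hK0.le
    have hsq1 : sk1 ^ 2 = K + 1 := Real.sq_sqrt (by linarith)
    have hsklt : sk < sk1 := Real.sqrt_lt_sqrt hK0.le (by linarith)
    set r := sk1 - sk with hrdef
    have hr0 : 0 < r := by rw [hrdef]; linarith
    have hrinv : r * (sk1 + sk) = 1 := by
      have : (sk1 - sk) * (sk1 + sk) = sk1 ^ 2 - sk ^ 2 := by ring
      rw [hrdef, this, hsq, hsq1]; ring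
    have hr1 : r ≤ 1 := by
      have h1 : sk1 ≤ sk + 1 := by
        have h2 : sk + 1 = Real.sqrt ((sk + 1) ^ 2) := (Real.sqrt_sq (by linarith)).symm
        rw [h2, hsk1def]
        exact Real.sqrt_le_sqrt (by nlinarith)
      rw [hrdef]; linarith
    set sa := Real.sqrt a with hsadef
    set sb := Real.sqrt b with hsbdef
    have hsa0 : 0 < sa := Real.sqrt_pos.mpr ha
    have hsb0 : 0 < sb := Real.sqrt_pos.mpr hb
    have hsa2 : sa ^ 2 = a := Real.sq_sqrt ha.le
    have hsb2 : sb ^ 2 = b := Real.sq_sqrt hb.le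
    have hab : Real.sqrt (a * b) = sa * sb := Real.sqrt_mul ha.le b
    have habdiv : Real.sqrt (a / b) = sa / sb := Real.sqrt_div ha.le b
    set y := Real.sqrt (a / b) * r with hydef
    have hy0 : 0 < y := by
      rw [hydef]
      exact mul_pos (Real.sqrt_pos.mpr (div_pos ha hb)) hr0
    have hyy : y = sa / sb * r := by rw [hydef, habdiv]
    -- key identity
    have h1 : b * y = sa * sb * r := by
      rw [hyy, ← hsb2]
      field_simp
    have h2a : (sa / sb * r) * (sa * sb * (sk1 + sk)) = a := by
      rw [← hsa2]
      field_simp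
      linear_combination hrinv
    have h2' : a * (1 / y) = sa * sb * (sk1 + sk) := by
      rw [hyy, ← h2a]
      field_simp [hsa0.ne', hsb0.ne', hr0.ne']
    have hiv : a * (1 / y) + b * y = 2 * Real.sqrt (a * b) * sk1 := by
      rw [h1, h2', hab, hrdef]; ring
    -- y > 1
    have hy1 : 1 < y := by
      by_contra hle
      push_neg at hle
      have hby : b * y ≤ b := by
        calc b * y ≤ b * 1 := mul_le_mul_of_nonneg_left hle hb.le
          _ = b := mul_one b
      have hexpand : a * (1 / y) + b * y - (a + b) = (1 - y) * (a - b * y) / y := by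
        field_simp
        ring
      have hnn : 0 ≤ (1 - y) * (a - b * y) / y :=
        div_nonneg (mul_nonneg (by linarith) (by linarith)) hy0.le
      have hge : a + b ≤ a * (1 / y) + b * y := by linarith
      rw [hiv] at hge
      rw [hμdef] at hμ
      linarith
    set lam := Real.log y with hlamdef
    have hlam0 : 0 < lam := Real.log_pos hy1
    have hexp : Real.exp lam = y := Real.exp_log hy0
    have hlamle : lam ≤ Real.log (a / b) / 2 := by
      have h3 : y ≤ Real.sqrt (a / b) := by
        rw [hydef]
        calc Real.sqrt (a / b) * r ≤ Real.sqrt (a / b) * 1 :=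
              mul_le_mul_of_nonneg_left hr1 (Real.sqrt_nonneg _)
          _ = Real.sqrt (a / b) := mul_one _
      have h4 : lam ≤ Real.log (Real.sqrt (a / b)) := Real.log_le_log hy0 h3
      rwa [Real.log_sqrt (div_pos ha hb).le] at h4
    have hθ0 : (0 : ℝ) < (t + 1) / ε := by positivity
    have hlamD : lam * ((t + 1) / ε) ≤ D := by
      rw [hDdef]
      have := mul_le_mul_of_nonneg_right hlamle hθ0.le
      calc lam * ((t + 1) / ε) ≤ Real.log (a / b) / 2 * ((t + 1) / ε) := this
        _ = (t + 1) / (2 * ε) * Real.log (a / b) := by field_simp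
    -- Chernoff
    have hterm : ∀ k1 ∈ Finset.range (m + 1), ∀ k2 ∈ Finset.range (m + 1),
        (if (k1 : ℝ) - (k2 : ℝ) < (t + 1) / ε * L then binomPMF m p k1 * binomPMF m q k2
          else 0)
        ≤ (binomPMF m p k1 * (1 / y) ^ k1)
            * ((binomPMF m q k2 * y ^ k2) * Real.exp (lam * ((t + 1) / ε * L))) := by
      intro k1 _ k2 _
      have hpm1 := hpmf p hp0 hp1 k1
      have hpm2 := hpmf q hq0 hq1 k2
      have e1 : (1 / y : ℝ) ^ k1 = Real.exp ((k1 : ℝ) * (-lam)) := by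
        rw [Real.exp_nat_mul, Real.exp_neg, hexp, one_div]
      have e2 : (y : ℝ) ^ k2 = Real.exp ((k2 : ℝ) * lam) := by
        rw [Real.exp_nat_mul, hexp]
      split_ifs with hcond
      · have hfac : (1 : ℝ) ≤ (1 / y) ^ k1 * (y ^ k2 * Real.exp (lam * ((t + 1) / ε * L))) := by
          rw [e1, e2, ← Real.exp_add, ← Real.exp_add]
          apply Real.one_le_exp
          have harg : (0:ℝ) ≤ lam * ((t + 1) / ε * L - (k1 : ℝ) + (k2 : ℝ)) :=
            mul_nonneg hlam0.le (by linarith)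
          have heq : (k1 : ℝ) * (-lam) + ((k2 : ℝ) * lam + lam * ((t + 1) / ε * L))
              = lam * ((t + 1) / ε * L - (k1 : ℝ) + (k2 : ℝ)) := by ring
          rw [heq]
          exact harg
        calc binomPMF m p k1 * binomPMF m q k2
            = binomPMF m p k1 * binomPMF m q k2 * 1 := (mul_one _).symm
          _ ≤ binomPMF m p k1 * binomPMF m q k2
                * ((1 / y) ^ k1 * (y ^ k2 * Real.exp (lam * ((t + 1) / ε * L)))) :=
              mul_le_mul_of_nonneg_left hfac (mul_nonneg hpm1 hpm2)
          _ = (binomPMF m p k1 * (1 / y) ^ k1)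
                * ((binomPMF m q k2 * y ^ k2) * Real.exp (lam * ((t + 1) / ε * L))) := by ring
      · refine mul_nonneg (mul_nonneg hpm1 (pow_nonneg (by positivity) k1))
          (mul_nonneg (mul_nonneg hpm2 (pow_nonneg hy0.le k2)) (Real.exp_pos _).le)
    have hbase1 : (0:ℝ) ≤ p * (1 / y) + (1 - p) := by
      have : 0 ≤ p * (1 / y) := mul_nonneg hp0 (by positivity)
      linarith
    have hbase2 : (0:ℝ) ≤ q * y + (1 - q) := by
      have : 0 ≤ q * y := mul_nonneg hq0 hy0.le
      linarith
    have hexp1 : (p * (1 / y) + (1 - p)) ^ m ≤ Real.exp ((m : ℝ) * (p * (1 / y - 1))) := by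
      rw [Real.exp_nat_mul]
      apply pow_le_pow_left₀ hbase1
      have := Real.add_one_le_exp (p * (1 / y - 1))
      calc p * (1 / y) + (1 - p) = p * (1 / y - 1) + 1 := by ring
        _ ≤ Real.exp (p * (1 / y - 1)) := this
    have hexp2 : (q * y + (1 - q)) ^ m ≤ Real.exp ((m : ℝ) * (q * (y - 1))) := by
      rw [Real.exp_nat_mul]
      apply pow_le_pow_left₀ hbase2
      have := Real.add_one_le_exp (q * (y - 1))
      calc q * y + (1 - q) = q * (y - 1) + 1 := by ring
        _ ≤ Real.exp (q * (y - 1)) := this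
    -- the final exponent comparison
    have hμeq : a * (1 / y - 1) + b * (y - 1) = -μ := by
      have hexpand : a * (1 / y - 1) + b * (y - 1) = (a * (1 / y) + b * y) - (a + b) := by ring
      rw [hexpand, hiv, hμdef, hsk1def]
      ring
    have hSineq : (m : ℝ) * (p * (1 / y - 1)) + ((m : ℝ) * (q * (y - 1)) + lam * ((t + 1) / ε * L))
        ≤ L * (-(M * μ - D)) := by
      have hsum2 : (m : ℝ) * (p * (1 / y - 1)) + (m : ℝ) * (q * (y - 1))
          = (m : ℝ) * L / c' * (-μ) := by
        rw [hpdef, hqdef, ← hμeq]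
        field_simp
      have hdiv : M ≤ (m : ℝ) / c' := (le_div_iff₀ hc').mpr hMc
      have h5 : M * μ ≤ (m : ℝ) / c' * μ := mul_le_mul_of_nonneg_right hdiv hμ.le
      have h6 : lam * ((t + 1) / ε) - (m : ℝ) / c' * μ ≤ D - M * μ := by
        linarith [hlamD]
      have h7 : L * (lam * ((t + 1) / ε) - (m : ℝ) / c' * μ) ≤ L * (D - M * μ) :=
        mul_le_mul_of_nonneg_left h6 hL.le
      have h8 : (m : ℝ) * (p * (1 / y - 1)) + ((m : ℝ) * (q * (y - 1)) + lam * ((t + 1) / ε * L))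
          = L * (lam * ((t + 1) / ε) - (m : ℝ) / c' * μ) := by
        rw [← add_assoc, hsum2]
        field_simp
        ring
      rw [h8]
      calc L * (lam * ((t + 1) / ε) - (m : ℝ) / c' * μ) ≤ L * (D - M * μ) := h7
        _ = L * (-(M * μ - D)) := by ring
    calc (∑ k1 ∈ Finset.range (m + 1), ∑ k2 ∈ Finset.range (m + 1),
          (if (k1 : ℝ) - (k2 : ℝ) < (t + 1) / ε * L then binomPMF m p k1 * binomPMF m q k2
            else 0))
        ≤ ∑ k1 ∈ Finset.range (m + 1), ∑ k2 ∈ Finset.range (m + 1),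
            (binomPMF m p k1 * (1 / y) ^ k1)
              * ((binomPMF m q k2 * y ^ k2) * Real.exp (lam * ((t + 1) / ε * L))) :=
          Finset.sum_le_sum fun k1 hk1 => Finset.sum_le_sum fun k2 hk2 => hterm k1 hk1 k2 hk2
      _ = (∑ k1 ∈ Finset.range (m + 1), binomPMF m p k1 * (1 / y) ^ k1)
            * (∑ k2 ∈ Finset.range (m + 1), (binomPMF m q k2 * y ^ k2)
                * Real.exp (lam * ((t + 1) / ε * L))) :=
          (Finset.sum_mul_sum (Finset.range (m + 1)) (Finset.range (m + 1))
            (fun k1 => binomPMF m p k1 * (1 / y) ^ k1)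
            (fun k2 => (binomPMF m q k2 * y ^ k2) * Real.exp (lam * ((t + 1) / ε * L)))).symm
      _ = (p * (1 / y) + (1 - p)) ^ m
            * ((q * y + (1 - q)) ^ m * Real.exp (lam * ((t + 1) / ε * L))) := by
          rw [binom_sum_mul, ← Finset.sum_mul, binom_sum_mul]
      _ ≤ Real.exp ((m : ℝ) * (p * (1 / y - 1)))
            * (Real.exp ((m : ℝ) * (q * (y - 1))) * Real.exp (lam * ((t + 1) / ε * L))) := by
          apply mul_le_mul hexp1
          · exact mul_le_mul_of_nonneg_right hexp2 (Real.exp_pos _).le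
          · exact mul_nonneg (pow_nonneg hbase2 m) (Real.exp_pos _).le
          · exact (Real.exp_pos _).le
      _ = Real.exp ((m : ℝ) * (p * (1 / y - 1))
            + ((m : ℝ) * (q * (y - 1)) + lam * ((t + 1) / ε * L))) := by
          rw [Real.exp_add, Real.exp_add]
      _ ≤ Real.exp (L * (-(M * μ - D))) := Real.exp_le_exp.mpr hSineq
      _ = (n : ℝ) ^ (-(M * μ - D)) := by
          rw [Real.rpow_def_of_pos hnR, hLdef]
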